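/- Let E be an integral domain, N ≥ 1, and set s := D₀ + D₁ + ⋯ + D_N ∈ E⟦D₀,…,D_N⟧. Suppose that for each 1 ≤ j ≤ N, f_j ∈ E⟦D₀,…,D_N⟧ involves only the variables D₀,…,D_{j−1}, and that D₀ + f₁·D₁ + f₂·D₂ + ⋯ + f_N·D_N ≡ D₀ + D₁ + ⋯ + D_N modulo the ideal of E⟦D₀,…,D_N⟧ generated by the elements D_j·s for 0 ≤ j ≤ N. Then f_j = 1 for every 1 ≤ j ≤ N. -/

import Mathlib

open MvPowerSeries

private lemma coeff_mul_X' {σ R : Type*} [Semiring R] (m : σ →₀ ℕ) (φ : MvPowerSeries σ R)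
    (t : σ) :
    MvPowerSeries.coeff m (φ * X t) =
      if Finsupp.single t 1 ≤ m then MvPowerSeries.coeff (m - Finsupp.single t 1) φ else 0 := by
  classical
  rw [MvPowerSeries.X_def, MvPowerSeries.coeff_mul_monomial]
  split_ifs with h
  · rw [mul_one]
  · rfl


/-- Over an integral domain `E`, with `s = D₀ + ⋯ + D_N` (`N ≥ 1`): if each
`f_j` (for `1 ≤ j ≤ N`) involves only the variables `D₀,…,D_{j−1}` and
`D₀ + f₁·D₁ + ⋯ + f_N·D_N ≡ D₀ + D₁ + ⋯ + D_N` modulo the ideal generated by the elements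
`D_j·s` (`0 ≤ j ≤ N`), then `f_j = 1` for every `1 ≤ j ≤ N`. -/
theorem correcting_series_unique_additive
    {E : Type*} [CommRing E] [IsDomain E] (N : ℕ) (hN : 1 ≤ N)
    (f : Fin (N + 1) → MvPowerSeries (Fin (N + 1)) E)
    (hf : ∀ j : Fin (N + 1), 0 < j → ∀ d : Fin (N + 1) →₀ ℕ,
      MvPowerSeries.coeff d (f j) ≠ 0 → ∀ i : Fin (N + 1), d i ≠ 0 → i < j)
    (hsum :
      (X 0 + ∑ j ∈ Finset.univ.filter (fun j : Fin (N + 1) => 0 < j), f j * X j)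
          - (∑ j : Fin (N + 1), (X j : MvPowerSeries (Fin (N + 1)) E)) ∈
        Ideal.span (Set.range fun j : Fin (N + 1) =>
          (X j : MvPowerSeries (Fin (N + 1)) E) * ∑ i : Fin (N + 1), X i)) :
    ∀ j : Fin (N + 1), 0 < j → f j = 1 := by
  classical
  set P : Finset (Fin (N + 1)) := Finset.univ.filter (fun j : Fin (N + 1) => 0 < j) with hPdef
  set s : MvPowerSeries (Fin (N + 1)) E := ∑ i : Fin (N + 1), X i with hsdef
  obtain ⟨c, hc⟩ := Ideal.mem_span_range_iff_exists_fun.mp hsum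
  set g : MvPowerSeries (Fin (N + 1)) E := ∑ j : Fin (N + 1), c j * X j with hgdef
  -- split the full sum
  have hPmem : ∀ j : Fin (N + 1), j ∈ P ↔ 0 < j := by
    intro j; simp [hPdef]
  have split : (∑ j : Fin (N + 1), (X j : MvPowerSeries (Fin (N + 1)) E)) = X 0 + ∑ j ∈ P, X j := by
    rw [← Finset.sum_filter_add_sum_filter_not Finset.univ (fun j : Fin (N + 1) => 0 < j)
      (fun j => (X j : MvPowerSeries (Fin (N + 1)) E))]
    have : Finset.univ.filter (fun j : Fin (N + 1) => ¬ 0 < j) = {0} := by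
      ext j; simp [Fin.pos_iff_ne_zero]
    rw [this, Finset.sum_singleton]
    ring
  -- the main equation
  have hEq : (∑ j ∈ P, (f j - 1) * X j) = g * s := by
    have h1 : g * s = ∑ j : Fin (N + 1), c j * (X j * s) := by
      rw [hgdef, Finset.sum_mul]
      exact Finset.sum_congr rfl fun j _ => mul_assoc _ _ _
    rw [h1, hc]
    have split' : s = X 0 + ∑ j ∈ P, X j := by rw [hsdef]; exact split
    rw [split']
    have h2 : ∀ j : Fin (N + 1), (f j - 1) * X j = f j * X j - X j := fun j => by ring
    simp only [h2, Finset.sum_sub_distrib]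
    ring
  -- the coefficientwise equation
  have key : ∀ m : Fin (N + 1) →₀ ℕ,
      (∑ j ∈ P, if Finsupp.single j 1 ≤ m then
          MvPowerSeries.coeff (m - Finsupp.single j 1) (f j - 1) else 0)
        = ∑ i : Fin (N + 1), (if Finsupp.single i 1 ≤ m then
            MvPowerSeries.coeff (m - Finsupp.single i 1) g else 0) := by
    intro m
    have h2 : g * s = ∑ i : Fin (N + 1), g * X i := by rw [hsdef, Finset.mul_sum]
    have := congrArg (MvPowerSeries.coeff m) hEq
    rw [h2, map_sum, map_sum] at this
    simpa only [coeff_mul_X'] using this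
  -- vanishing of coefficients of f j - 1 at bad monomials
  have hH : ∀ j : Fin (N + 1), 0 < j → ∀ d : Fin (N + 1) →₀ ℕ, ∀ i : Fin (N + 1),
      d i ≠ 0 → ¬ i < j → MvPowerSeries.coeff d (f j - 1) = 0 := by
    intro j hj d i hdi hij
    have hd0 : d ≠ 0 := fun h => hdi (by simp [h])
    have h1 : MvPowerSeries.coeff d (f j) = 0 := by
      by_contra hne
      exact hij (hf j hj d hne i hdi)
    rw [map_sub, h1, MvPowerSeries.coeff_one, if_neg hd0, sub_zero]
  -- the measure
  set μ : (Fin (N + 1) →₀ ℕ) → Fin (N + 1) → ℕ :=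
    fun d k => ∑ i ∈ Finset.univ.erase k, d i with hμdef
  -- key vanishing claim for g
  have T : ∀ (n : ℕ) (k : Fin (N + 1)) (d : Fin (N + 1) →₀ ℕ), μ d k = n →
      (∀ i, k < i → d i = 0) → d k ≠ 0 → MvPowerSeries.coeff d g = 0 := by
    intro n
    induction n using Nat.strong_induction_on with
    | _ n ih =>
      intro k d hn hsupp hdk
      have hkey := key (d + Finsupp.single k 1)
      have happ : ∀ i : Fin (N + 1),
          ((d + Finsupp.single k 1 : (Fin (N + 1)) →₀ ℕ)) i = d i + (if i = k then 1 else 0) := by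
        intro i; simp [Finsupp.single_apply, eq_comm]
      -- LHS is 0
      have hL : (∑ j ∈ P, if Finsupp.single j 1 ≤ d + Finsupp.single k 1 then
          MvPowerSeries.coeff (d + Finsupp.single k 1 - Finsupp.single j 1) (f j - 1) else 0)
          = 0 := by
        apply Finset.sum_eq_zero
        intro j hjP
        have hj : 0 < j := (hPmem j).mp hjP
        by_cases hle : Finsupp.single j 1 ≤ d + Finsupp.single k 1
        · rw [if_pos hle]
          rcases lt_trichotomy j k with hlt | heq | hgt
          · apply hH j hj _ k _ (not_lt.mpr hlt.le)
            have : ((d + Finsupp.single k 1 - Finsupp.single j 1 : (Fin (N + 1)) →₀ ℕ)) k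
                = d k + 1 - (if j = k then 1 else 0) := by
              rw [Finsupp.tsub_apply, happ k, if_pos rfl, Finsupp.single_apply]
            rw [this, if_neg hlt.ne]
            omega
          · subst heq
            rw [add_tsub_cancel_right]
            exact hH j hj d j hdk (lt_irrefl j)
          · exfalso
            have h1 := Finsupp.single_le_iff.mp hle
            rw [happ j, if_neg (by omega : ¬ j = k), add_zero, hsupp j hgt] at h1
            omega
        · rw [if_neg hle]
      rw [hL] at hkey
      -- RHS reduces to the coefficient at d
      rw [Finset.sum_eq_single_of_mem k (Finset.mem_univ k) ?side] at hkey
      case side =>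
        intro i _ hik
        by_cases hle : Finsupp.single i 1 ≤ d + Finsupp.single k 1
        · rw [if_pos hle]
          have h1i : 1 ≤ d i := by
            have h1 := Finsupp.single_le_iff.mp hle
            rwa [happ i, if_neg hik, add_zero] at h1
          have hik2 : ¬ k < i := fun h => by rw [hsupp i h] at h1i; omega
          have hd'app : ∀ i' : Fin (N + 1),
              ((d + Finsupp.single k 1 - Finsupp.single i 1 : (Fin (N + 1)) →₀ ℕ)) i'
                = d i' + (if i' = k then 1 else 0) - (if i = i' then 1 else 0) := by
            intro i'
            rw [Finsupp.tsub_apply, happ i', Finsupp.single_apply]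
          apply ih (μ (d + Finsupp.single k 1 - Finsupp.single i 1) k) ?lt k _ rfl ?hsupp ?hdk
          case hsupp =>
            intro i' hki'
            rw [hd'app i', if_neg (by omega : ¬ i' = k),
              if_neg (by omega : ¬ i = i'), hsupp i' hki']
          case hdk =>
            rw [hd'app k, if_pos rfl, if_neg hik]
            omega
          case lt =>
            rw [← hn]
            apply Finset.sum_lt_sum
            · intro i' hi'
              have hi'k : i' ≠ k := (Finset.mem_erase.mp hi').1
              rw [hd'app i', if_neg hi'k]
              omega
            · refine ⟨i, Finset.mem_erase.mpr ⟨hik, Finset.mem_univ i⟩, ?_⟩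
              rw [hd'app i, if_neg hik, if_pos rfl]
              omega
        · rw [if_neg hle]
      have hcond : Finsupp.single k 1 ≤ d + Finsupp.single k 1 := by
        rw [Finsupp.single_le_iff, happ k, if_pos rfl]
        omega
      rw [if_pos hcond, add_tsub_cancel_right] at hkey
      exact hkey.symm
  -- g vanishes
  have hgzero : g = 0 := by
    apply MvPowerSeries.ext
    intro d
    rw [map_zero]
    by_cases hd : d = 0
    · subst hd
      rw [hgdef, map_sum]
      exact Finset.sum_eq_zero fun j _ => MvPowerSeries.coeff_zero_mul_X _ _
    · have hne : d.support.Nonempty := Finsupp.support_nonempty_iff.mpr hd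
      set k := d.support.max' hne with hkdef
      apply T (μ d k) k d rfl ?_ ?_
      · intro i hki
        by_contra h
        exact absurd (d.support.le_max' i (Finsupp.mem_support_iff.mpr h)) (not_le.mpr hki)
      · exact Finsupp.mem_support_iff.mp (d.support.max'_mem hne)
  -- the reduced coefficientwise equation
  have key2 : ∀ m : Fin (N + 1) →₀ ℕ,
      (∑ j ∈ P, if Finsupp.single j 1 ≤ m then
          MvPowerSeries.coeff (m - Finsupp.single j 1) (f j - 1) else 0) = 0 := by
    intro m
    rw [key m]
    apply Finset.sum_eq_zero
    intro i _
    split_ifs with h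
    · rw [hgzero, map_zero]
    · rfl
  -- conclusion
  intro j hj
  rw [← sub_eq_zero]
  apply MvPowerSeries.ext
  intro d
  rw [map_zero]
  by_cases hcase : ∀ i : Fin (N + 1), d i ≠ 0 → i < j
  · have hkey := key2 (d + Finsupp.single j 1)
    have happ : ∀ i : Fin (N + 1),
        ((d + Finsupp.single j 1 : (Fin (N + 1)) →₀ ℕ)) i = d i + (if i = j then 1 else 0) := by
      intro i; simp [Finsupp.single_apply, eq_comm]
    rw [Finset.sum_eq_single_of_mem j ((hPmem j).mpr hj) ?side] at hkey
    case side =>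
      intro j' hj'P hj'j
      have hj' : 0 < j' := (hPmem j').mp hj'P
      by_cases hle : Finsupp.single j' 1 ≤ d + Finsupp.single j 1
      · rw [if_pos hle]
        rcases lt_or_gt_of_ne hj'j with hlt | hgt
        · apply hH j' hj' _ j _ (not_lt.mpr hlt.le)
          rw [Finsupp.tsub_apply, happ j, if_pos rfl, Finsupp.single_apply,
            if_neg (hj'j : ¬ j' = j)]
          omega
        · exfalso
          have h1 := Finsupp.single_le_iff.mp hle
          rw [happ j', if_neg hj'j, add_zero] at h1
          have := hcase j' (by omega)
          omega
      · rw [if_neg hle]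
    have hcond : Finsupp.single j 1 ≤ d + Finsupp.single j 1 := by
      rw [Finsupp.single_le_iff, happ j, if_pos rfl]
      omega
    rw [if_pos hcond, add_tsub_cancel_right] at hkey
    exact hkey
  · push_neg at hcase
    obtain ⟨i, hdi, hij⟩ := hcase
    exact hH j hj d i hdi (not_lt.mpr hij)
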